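/- Let 0 < β < 2, a > 0 and λ₁ > 0. Then there exists a constant C₁ > 0 (depending only on β, a, λ₁) such that for every λ ≥ λ₁ and every t ∈ [0, a] one has E_{β,1}(λ t^β) ≤ C₁ · exp(λ^{1/β} t). -/

import Mathlib

open Real

/-- The Mittag-Leffler function `E_{β,γ}(z) = ∑_{k=0}^∞ z^k / Γ(βk + γ)` for real `z`. -/
noncomputable def mittagLeffler (β γ z : ℝ) : ℝ :=
  ∑' k : ℕ, z ^ k / Real.Gamma (β * k + γ)

lemma ML_exp_tsum' (x : ℝ) : Real.exp x = ∑' n : ℕ, x ^ n / (Nat.factorial n : ℝ) := by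
  rw [Real.exp_eq_exp_ℝ, NormedSpace.exp_eq_tsum_div]

lemma ML_gamma_lb (s : ℝ) (hs : 0 < s) :
    ((Nat.factorial ⌈s⌉₊) : ℝ) ≤ Real.Gamma (s + 1) * (s + 1) ^ ((⌈s⌉₊ : ℝ) - s) := by
  set n := ⌈s⌉₊ with hn
  set δ : ℝ := (n : ℝ) - s with hδ
  have hδ0 : 0 ≤ δ := by
    have := Nat.le_ceil s
    simp only [hδ]; linarith
  have hδ1 : δ ≤ 1 := by
    have := Nat.ceil_lt_add_one hs.le
    simp only [hδ]; linarith
  have hs1 : (0 : ℝ) < s + 1 := by linarith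
  have hs2 : (0 : ℝ) < s + 2 := by linarith
  have hΓ1 : 0 < Real.Gamma (s + 1) := Real.Gamma_pos_of_pos hs1
  have hΓ2 : 0 < Real.Gamma (s + 2) := Real.Gamma_pos_of_pos hs2
  have hconv := Real.convexOn_log_Gamma.2 (Set.mem_Ioi.mpr hs1) (Set.mem_Ioi.mpr hs2)
    (by linarith : (0:ℝ) ≤ 1 - δ) hδ0 (by ring)
  have harg : (1 - δ) • (s + 1) + δ • (s + 2) = (n : ℝ) + 1 := by
    simp only [smul_eq_mul, hδ]; ring
  rw [harg] at hconv
  have hG2 : Real.Gamma (s + 2) = (s + 1) * Real.Gamma (s + 1) := by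
    have : s + 2 = (s + 1) + 1 := by ring
    rw [this, Real.Gamma_add_one hs1.ne']
  have hlog : Real.log (Real.Gamma ((n : ℝ) + 1)) ≤
      Real.log (Real.Gamma (s + 1)) + δ * Real.log (s + 1) := by
    have : (log ∘ Real.Gamma) ((n:ℝ)+1) ≤ (1 - δ) • (log ∘ Real.Gamma) (s+1)
        + δ • (log ∘ Real.Gamma) (s+2) := hconv
    simp only [Function.comp, smul_eq_mul] at this
    rw [hG2, Real.log_mul hs1.ne' hΓ1.ne'] at this
    linarith
  have hfact : Real.Gamma ((n : ℝ) + 1) = (Nat.factorial n : ℝ) := by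
    exact_mod_cast Real.Gamma_nat_eq_factorial n
  rw [hfact] at hlog
  have hrhs : Real.log (Real.Gamma (s + 1) * (s + 1) ^ δ) =
      Real.log (Real.Gamma (s + 1)) + δ * Real.log (s + 1) := by
    rw [Real.log_mul hΓ1.ne' (Real.rpow_pos_of_pos hs1 δ).ne', Real.log_rpow hs1]
  have hpos : (0:ℝ) < (Nat.factorial n : ℝ) := by exact_mod_cast Nat.factorial_pos n
  have hpos2 : 0 < Real.Gamma (s + 1) * (s + 1) ^ δ := by positivity
  rw [← hrhs] at hlog
  exact (Real.log_le_log_iff hpos hpos2).mp hlog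

lemma ML_term_le (x s : ℝ) (hx : 0 < x) (hs : 0 < s) :
    x ^ s / Real.Gamma (s + 1) ≤
      x ^ (⌈s⌉₊) / (Nat.factorial ⌈s⌉₊ : ℝ)
        + 2 * (x ^ (⌈s⌉₊ - 1) / (Nat.factorial (⌈s⌉₊ - 1) : ℝ)) := by
  set n := ⌈s⌉₊ with hn
  have hn1 : 1 ≤ n := Nat.one_le_iff_ne_zero.mpr (by
    simp only [hn]; exact (Nat.ceil_pos.mpr hs).ne')
  set δ : ℝ := (n : ℝ) - s with hδ
  have hδ0 : 0 ≤ δ := by have := Nat.le_ceil s; simp only [hδ]; linarith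
  have hδ1 : δ ≤ 1 := by have := Nat.ceil_lt_add_one hs.le; simp only [hδ]; linarith
  have hs1 : (0 : ℝ) < s + 1 := by linarith
  have hΓ : 0 < Real.Gamma (s + 1) := Real.Gamma_pos_of_pos hs1
  have hfac : (0:ℝ) < (Nat.factorial n : ℝ) := by exact_mod_cast Nat.factorial_pos n
  have h1 : x ^ s / Real.Gamma (s + 1) ≤ x ^ s * (s + 1) ^ δ / (Nat.factorial n : ℝ) := by
    rw [div_le_div_iff₀ hΓ hfac]
    have hg := ML_gamma_lb s hs
    rw [← hn, ← hδ] at hg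
    have hxs : 0 ≤ x ^ s := (Real.rpow_pos_of_pos hx s).le
    nlinarith
  have h2 : x ^ s * (s + 1) ^ δ = x ^ (n : ℝ) * ((s + 1) / x) ^ δ := by
    rw [Real.div_rpow hs1.le hx.le, show (n : ℝ) = s + δ by rw [hδ]; ring,
      Real.rpow_add hx]
    have : x ^ δ ≠ 0 := (Real.rpow_pos_of_pos hx δ).ne'
    field_simp
  have h3 : ((s + 1) / x) ^ δ ≤ 1 + (s + 1) / x := by
    set c := (s + 1) / x with hc
    have hc0 : 0 ≤ c := by positivity
    rcases le_or_gt c 1 with h | h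
    · have := Real.rpow_le_one hc0 h hδ0
      linarith
    · have := Real.rpow_le_rpow_of_exponent_le h.le hδ1
      rw [Real.rpow_one] at this
      linarith
  have hxn : x ^ (n : ℝ) = x ^ n := Real.rpow_natCast x n
  have hxn' : x ^ n = x ^ (n - 1) * x := by
    conv_lhs => rw [show n = (n - 1) + 1 by omega]
    rw [pow_succ]
  have hfacn : (Nat.factorial n : ℝ) = (n : ℝ) * (Nat.factorial (n - 1) : ℝ) := by
    exact_mod_cast (Nat.mul_factorial_pred (by omega : n ≠ 0)).symm
  have hxpow : 0 ≤ x ^ (n - 1) := by positivity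
  have hs2n : s + 1 ≤ 2 * (n : ℝ) := by
    have h := Nat.le_ceil s
    rw [← hn] at h
    have : (1:ℝ) ≤ (n:ℝ) := by exact_mod_cast hn1
    linarith
  have hfac' : (0:ℝ) < (Nat.factorial (n-1) : ℝ) := by exact_mod_cast Nat.factorial_pos _
  have hn0 : (0:ℝ) < (n:ℝ) := by exact_mod_cast hn1
  calc x ^ s / Real.Gamma (s + 1)
      ≤ x ^ s * (s + 1) ^ δ / (Nat.factorial n : ℝ) := h1
    _ = x ^ (n:ℝ) * ((s + 1) / x) ^ δ / (Nat.factorial n : ℝ) := by rw [h2]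
    _ ≤ x ^ (n:ℝ) * (1 + (s + 1) / x) / (Nat.factorial n : ℝ) := by
        gcongr
    _ = x ^ n / (Nat.factorial n : ℝ) + (s+1) * (x ^ (n-1) / (Nat.factorial n : ℝ)) := by
        rw [hxn, hxn']
        field_simp
    _ ≤ x ^ n / (Nat.factorial n : ℝ)
        + 2 * (x ^ (n - 1) / (Nat.factorial (n - 1) : ℝ)) := by
        have key : (s+1) * (x ^ (n-1) / (Nat.factorial n : ℝ))
            = ((s+1)/(n:ℝ)) * (x ^ (n-1) / (Nat.factorial (n-1) : ℝ)) := by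
          rw [hfacn]
          field_simp
        have h6 : (s+1)/(n:ℝ) ≤ 2 := by
          rw [div_le_iff₀ hn0]; linarith
        have h7 : ((s+1)/(n:ℝ)) * (x ^ (n-1) / (Nat.factorial (n-1) : ℝ))
            ≤ 2 * (x ^ (n-1) / (Nat.factorial (n-1) : ℝ)) :=
          mul_le_mul_of_nonneg_right h6 (by positivity)
        rw [key]
        linarith

lemma ML_card_fiber (β : ℝ) (hβ : 0 < β) (s : Finset ℕ) (hs : ∀ k ∈ s, 1 ≤ k) (n : ℕ) :
    (s.filter (fun k : ℕ => ⌈β * (k:ℝ)⌉₊ = n)).card ≤ ⌊1/β⌋₊ + 1 := by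
  rcases Nat.eq_zero_or_pos n with rfl | hn
  · have : s.filter (fun k : ℕ => ⌈β * (k:ℝ)⌉₊ = 0) = ∅ := by
      rw [Finset.filter_eq_empty_iff]
      intro k hk
      have hk1 : 1 ≤ k := hs k hk
      have : 0 < β * (k:ℝ) := by
        have : (0:ℝ) < (k:ℝ) := by exact_mod_cast hk1
        positivity
      exact (Nat.ceil_pos.mpr this).ne'
    rw [this]; simp
  · have hsub : s.filter (fun k : ℕ => ⌈β * (k:ℝ)⌉₊ = n) ⊆
        Finset.Ioc ⌊((n:ℝ) - 1)/β⌋₊ ⌊(n:ℝ)/β⌋₊ := by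
      intro k hk
      rw [Finset.mem_filter] at hk
      obtain ⟨hks, hceil⟩ := hk
      have hupper : (k:ℝ) ≤ (n:ℝ)/β := by
        have h := Nat.le_ceil (β * (k:ℝ))
        rw [hceil] at h
        rw [le_div_iff₀ hβ]
        linarith [h]
      have hlower : ((n:ℝ) - 1)/β < (k:ℝ) := by
        have h : ((n - 1 : ℕ) : ℝ) < β * (k:ℝ) := by
          apply Nat.lt_ceil.mp
          omega
        have hc : ((n - 1 : ℕ) : ℝ) = (n:ℝ) - 1 := by
          push_cast [Nat.cast_sub hn]
          ring
        rw [div_lt_iff₀ hβ]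
        rw [hc] at h
        linarith
      rw [Finset.mem_Ioc]
      constructor
      · have hA : (0:ℝ) ≤ ((n:ℝ) - 1)/β := by
          have : (1:ℝ) ≤ (n:ℝ) := by exact_mod_cast hn
          exact div_nonneg (by linarith) hβ.le
        have := Nat.floor_le hA
        exact_mod_cast this.trans_lt hlower
      · exact Nat.le_floor hupper
    have hcard := Finset.card_le_card hsub
    rw [Nat.card_Ioc] at hcard
    have hflo : ⌊(n:ℝ)/β⌋₊ ≤ ⌊((n:ℝ) - 1)/β⌋₊ + ⌊1/β⌋₊ + 1 := by
      have hA : (0:ℝ) ≤ ((n:ℝ) - 1)/β := by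
        have : (1:ℝ) ≤ (n:ℝ) := by exact_mod_cast hn
        exact div_nonneg (by linarith) hβ.le
      have hB : (0:ℝ) ≤ 1/β := by positivity
      have h1 : (⌊(n:ℝ)/β⌋₊ : ℝ) ≤ (n:ℝ)/β := Nat.floor_le (by positivity)
      have h2 : ((n:ℝ) - 1)/β < ⌊((n:ℝ) - 1)/β⌋₊ + 1 := Nat.lt_floor_add_one _
      have h3 : 1/β < ⌊1/β⌋₊ + 1 := Nat.lt_floor_add_one _
      have h4 : (n:ℝ)/β = ((n:ℝ) - 1)/β + 1/β := by field_simp; ring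
      exact_mod_cast Nat.lt_succ_iff.mp (by exact_mod_cast (by push_cast; linarith :
        (⌊(n:ℝ)/β⌋₊ : ℝ) < ((⌊((n:ℝ) - 1)/β⌋₊ + ⌊1/β⌋₊ + 1 : ℕ) : ℝ) + 1))
    omega

lemma ML_sum_comp_le (c : ℕ → ℝ) (hc0 : ∀ n, 0 ≤ c n) (hsum : Summable c) (f : ℕ → ℕ)
    (s : Finset ℕ) (M : ℕ) (hM : ∀ n, (s.filter fun k : ℕ => f k = n).card ≤ M) :
    ∑ k ∈ s, c (f k) ≤ M * ∑' n, c n := by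
  classical
  rw [Finset.sum_comp]
  calc ∑ n ∈ s.image f, (s.filter fun k : ℕ => f k = n).card • c n
      ≤ ∑ n ∈ s.image f, (M : ℝ) * c n := by
        apply Finset.sum_le_sum
        intro n _
        rw [nsmul_eq_mul]
        exact mul_le_mul_of_nonneg_right (by exact_mod_cast hM n) (hc0 n)
    _ = M * ∑ n ∈ s.image f, c n := by rw [Finset.mul_sum]
    _ ≤ M * ∑' n, c n := by
        apply mul_le_mul_of_nonneg_left (Summable.sum_le_tsum _ (fun n _ => hc0 n) hsum)
        positivity

lemma ML_main (β x : ℝ) (hβ : 0 < β) (hx : 0 < x) :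
    mittagLeffler β 1 (x ^ β) ≤ ((3 * (⌊1/β⌋₊ + 1) + 1 : ℕ) : ℝ) * Real.exp x := by
  classical
  set M : ℕ := ⌊1/β⌋₊ + 1 with hM
  set c : ℕ → ℝ := fun m => x ^ m / (Nat.factorial m : ℝ) with hc
  have hc0 : ∀ n, 0 ≤ c n := fun n => by
    simp only [hc]; positivity
  have hcsum : Summable c := Real.summable_pow_div_factorial x
  have hctsum : ∑' n, c n = Real.exp x := (ML_exp_tsum' x).symm
  have hexp1 : (1:ℝ) ≤ Real.exp x := Real.one_le_exp hx.le
  unfold mittagLeffler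
  apply Real.tsum_le_of_sum_range_le
  · intro k
    have h1 : (0:ℝ) ≤ (x ^ β) ^ k := by positivity
    have h2 : (0:ℝ) < Real.Gamma (β * k + 1) :=
      Real.Gamma_pos_of_pos (by positivity)
    exact div_nonneg h1 h2.le
  · intro N
    rcases Nat.eq_zero_or_pos N with rfl | hN
    · simp
      positivity
    have h0mem : 0 ∈ Finset.range N := Finset.mem_range.mpr hN
    rw [← Finset.add_sum_erase _ _ h0mem]
    have hterm0 : (x ^ β) ^ (0:ℕ) / Real.Gamma (β * (0:ℕ) + 1) = 1 := by
      simp [Real.Gamma_one]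
    set t : Finset ℕ := (Finset.range N).erase 0 with ht
    have htk : ∀ k ∈ t, 1 ≤ k := by
      intro k hk
      have := Finset.mem_erase.mp hk
      omega
    have hbound : ∀ k ∈ t, (x ^ β) ^ k / Real.Gamma (β * k + 1) ≤
        c ⌈β * (k:ℝ)⌉₊ + 2 * c (⌈β * (k:ℝ)⌉₊ - 1) := by
      intro k hk
      have hk1 : 1 ≤ k := htk k hk
      have hs : 0 < β * (k:ℝ) := by
        have : (0:ℝ) < (k:ℝ) := by exact_mod_cast hk1
        positivity
      have hrw : (x ^ β) ^ k = x ^ (β * (k:ℝ)) := by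
        rw [← Real.rpow_natCast (x ^ β) k, ← Real.rpow_mul hx.le]
      rw [hrw]
      exact ML_term_le x (β * (k:ℝ)) hx hs
    have hsum1 : ∑ k ∈ t, c ⌈β * (k:ℝ)⌉₊ ≤ M * Real.exp x := by
      have := ML_sum_comp_le c hc0 hcsum (fun k => ⌈β * (k:ℝ)⌉₊) t M
        (fun n => ML_card_fiber β hβ t htk n)
      rwa [hctsum] at this
    have hsum2 : ∑ k ∈ t, c (⌈β * (k:ℝ)⌉₊ - 1) ≤ M * Real.exp x := by
      have hcard : ∀ n, (t.filter fun k : ℕ => ⌈β * (k:ℝ)⌉₊ - 1 = n).card ≤ M := by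
        intro n
        have heq : (t.filter fun k : ℕ => ⌈β * (k:ℝ)⌉₊ - 1 = n)
            = (t.filter fun k : ℕ => ⌈β * (k:ℝ)⌉₊ = n + 1) := by
          apply Finset.filter_congr
          intro k hk
          have hk1 : 1 ≤ k := htk k hk
          have hs : 0 < β * (k:ℝ) := by
            have : (0:ℝ) < (k:ℝ) := by exact_mod_cast hk1
            positivity
          have hcpos : 1 ≤ ⌈β * (k:ℝ)⌉₊ := Nat.ceil_pos.mpr hs
          constructor <;> intro h <;> omega
        rw [heq]
        exact ML_card_fiber β hβ t htk (n + 1)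
      have := ML_sum_comp_le c hc0 hcsum (fun k => ⌈β * (k:ℝ)⌉₊ - 1) t M hcard
      rwa [hctsum] at this
    have htotal : ∑ k ∈ t, (x ^ β) ^ k / Real.Gamma (β * k + 1) ≤
        3 * M * Real.exp x := by
      calc ∑ k ∈ t, (x ^ β) ^ k / Real.Gamma (β * k + 1)
          ≤ ∑ k ∈ t, (c ⌈β * (k:ℝ)⌉₊ + 2 * c (⌈β * (k:ℝ)⌉₊ - 1)) :=
            Finset.sum_le_sum hbound
        _ = ∑ k ∈ t, c ⌈β * (k:ℝ)⌉₊ + 2 * ∑ k ∈ t, c (⌈β * (k:ℝ)⌉₊ - 1) := by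
            rw [Finset.sum_add_distrib, Finset.mul_sum]
        _ ≤ M * Real.exp x + 2 * (M * Real.exp x) := by
            have h2' : 2 * ∑ k ∈ t, c (⌈β * (k:ℝ)⌉₊ - 1) ≤ 2 * (M * Real.exp x) := by
              linarith
            linarith
        _ = 3 * M * Real.exp x := by ring
    rw [hterm0]
    have hMcast : ((3 * M + 1 : ℕ) : ℝ) = 3 * (M:ℝ) + 1 := by push_cast; ring
    rw [hMcast]
    linarith

/-- for `0 < β < 2`, `a > 0`, `λ₁ > 0` there is `C₁ > 0` (depending only on
`β, a, λ₁`) with `E_{β,1}(λ t^β) ≤ C₁ · exp(λ^{1/β} t)` for all `λ ≥ λ₁`, `t ∈ [0,a]`. -/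
theorem mittagLeffler_one_upper_bound (β a lam₁ : ℝ) (hβ0 : 0 < β) (hβ2 : β < 2)
    (ha : 0 < a) (hlam₁ : 0 < lam₁) :
    ∃ C₁ : ℝ, 0 < C₁ ∧ ∀ lam : ℝ, lam₁ ≤ lam → ∀ t ∈ Set.Icc (0 : ℝ) a,
      mittagLeffler β 1 (lam * t ^ β) ≤ C₁ * Real.exp (lam ^ (1 / β) * t) := by
  refine ⟨((3 * (⌊1/β⌋₊ + 1) + 1 : ℕ) : ℝ), by positivity, ?_⟩
  intro lam hlam t ht
  obtain ⟨ht0, hta⟩ := ht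
  have hlam0 : 0 < lam := lt_of_lt_of_le hlam₁ hlam
  have hC1 : (1:ℝ) ≤ ((3 * (⌊1/β⌋₊ + 1) + 1 : ℕ) : ℝ) := by
    have : (1:ℕ) ≤ 3 * (⌊1/β⌋₊ + 1) + 1 := by omega
    exact_mod_cast this
  rcases eq_or_lt_of_le ht0 with rfl | ht0'
  · -- t = 0
    have hz : lam * (0:ℝ) ^ β = 0 := by
      rw [Real.zero_rpow hβ0.ne', mul_zero]
    rw [hz]
    have hML : mittagLeffler β 1 0 = 1 := by
      unfold mittagLeffler
      rw [tsum_eq_single 0]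
      · simp [Real.Gamma_one]
      · intro b hb
        rw [zero_pow hb, zero_div]
    rw [hML, mul_zero, Real.exp_zero, mul_one]
    exact hC1
  · -- t > 0
    set x : ℝ := lam ^ (1/β) * t with hxdef
    have hx : 0 < x := mul_pos (Real.rpow_pos_of_pos hlam0 _) ht0'
    have hz : lam * t ^ β = x ^ β := by
      rw [hxdef, Real.mul_rpow (Real.rpow_pos_of_pos hlam0 _).le ht0'.le,
        ← Real.rpow_mul hlam0.le, one_div, inv_mul_cancel₀ hβ0.ne', Real.rpow_one]
    rw [hz]
    exact ML_main β x hβ0 hx
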